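/- Fix continuous functions ℓ, f : ℝ → ℝ, and suppose x, e₁, e₂, e₃ : ℝ² → ℝ³ are C² functions satisfying the system: ∂x/∂u = e₁, ∂x/∂v = e₂, ∂e₁/∂u = 0, ∂e₁/∂v = e₃, ∂e₂/∂u = e₃, ∂e₂/∂v = (u·ℓ(v) + f(v))·e₁, ∂e₃/∂u = 0, ∂e₃/∂v = ℓ(v)·e₁. Then there exist functions x̄, ē₁, ē₂, ē₃ of v alone such that x(u,v) = u·ē₁(v) + x̄(v), e₁(u,v) = ē₁(v), e₂(u,v) = u·ē₃(v) + ē₂(v), e₃(u,v) = ē₃(v), and these satisfy x̄' = ē₂, ē₁' = ē₃, ē₂' = f·ē₁, ē₃' = ℓ·ē₁. -/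

import Mathlib

lemma affine_of_const_deriv (g : ℝ → Fin 3 → ℝ) (c : Fin 3 → ℝ)
    (h : ∀ u, HasDerivAt g c u) : ∀ u, g u = u • c + g 0 := by
  intro u
  have hd : ∀ t : ℝ, HasDerivAt (fun t : ℝ => g t - t • c) 0 t := by
    intro t
    exact ((h t).sub ((hasDerivAt_id t).smul_const c)).congr_deriv (by simp)
  have hconst := is_const_of_deriv_eq_zero (f := fun t : ℝ => g t - t • c)
    (fun t => (hd t).differentiableAt) (fun t => (hd t).deriv) u 0
  simp only [zero_smul, sub_zero] at hconst
  have : g u - u • c = g 0 := hconst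
  linear_combination (norm := module) this

/-- Every C² solution of the structure PDE system (4.4) for hyperbolic affine
flat, affine minimal surfaces reduces to the ODE system (4.6): there exist
functions of v alone with x(u,v) = u ē₁(v) + x̄(v), e₁ = ē₁, e₂ = u ē₃ + ē₂,
e₃ = ē₃, and x̄' = ē₂, ē₁' = ē₃, ē₂' = f ē₁, ē₃' = ℓ ē₁. -/
theorem pde_system_reduces_to_ode
    (ℓ f : ℝ → ℝ) (hℓ : Continuous ℓ) (hf : Continuous f)
    (x e₁ e₂ e₃ : ℝ × ℝ → (Fin 3 → ℝ))
    (hx : ContDiff ℝ 2 x) (he₁ : ContDiff ℝ 2 e₁)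
    (he₂ : ContDiff ℝ 2 e₂) (he₃ : ContDiff ℝ 2 e₃)
    (hxu : ∀ u v, HasDerivAt (fun u' => x (u', v)) (e₁ (u, v)) u)
    (hxv : ∀ u v, HasDerivAt (fun v' => x (u, v')) (e₂ (u, v)) v)
    (he₁u : ∀ u v, HasDerivAt (fun u' => e₁ (u', v)) 0 u)
    (he₁v : ∀ u v, HasDerivAt (fun v' => e₁ (u, v')) (e₃ (u, v)) v)
    (he₂u : ∀ u v, HasDerivAt (fun u' => e₂ (u', v)) (e₃ (u, v)) u)
    (he₂v : ∀ u v, HasDerivAt (fun v' => e₂ (u, v'))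
      ((u * ℓ v + f v) • e₁ (u, v)) v)
    (he₃u : ∀ u v, HasDerivAt (fun u' => e₃ (u', v)) 0 u)
    (he₃v : ∀ u v, HasDerivAt (fun v' => e₃ (u, v')) (ℓ v • e₁ (u, v)) v) :
    ∃ xb eb₁ eb₂ eb₃ : ℝ → (Fin 3 → ℝ),
      (∀ u v, x (u, v) = u • eb₁ v + xb v) ∧
      (∀ u v, e₁ (u, v) = eb₁ v) ∧
      (∀ u v, e₂ (u, v) = u • eb₃ v + eb₂ v) ∧
      (∀ u v, e₃ (u, v) = eb₃ v) ∧
      (∀ v, HasDerivAt xb (eb₂ v) v) ∧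
      (∀ v, HasDerivAt eb₁ (eb₃ v) v) ∧
      (∀ v, HasDerivAt eb₂ (f v • eb₁ v) v) ∧
      (∀ v, HasDerivAt eb₃ (ℓ v • eb₁ v) v) := by
  refine ⟨fun v => x (0, v), fun v => e₁ (0, v), fun v => e₂ (0, v),
    fun v => e₃ (0, v), ?_, ?_, ?_, ?_, ?_, ?_, ?_, ?_⟩
  · -- x (u,v) = u • e₁(0,v) + x(0,v)
    intro u v
    have h1 : ∀ u', e₁ (u', v) = e₁ (0, v) := by
      intro u'
      have := affine_of_const_deriv (fun u' => e₁ (u', v)) 0 (fun u => he₁u u v) u'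
      simpa using this
    have := affine_of_const_deriv (fun u' => x (u', v)) (e₁ (0, v))
      (fun u => by simpa [h1 u] using hxu u v) u
    simpa using this
  · intro u v
    have := affine_of_const_deriv (fun u' => e₁ (u', v)) 0 (fun u => he₁u u v) u
    simpa using this
  · intro u v
    have h3 : ∀ u', e₃ (u', v) = e₃ (0, v) := by
      intro u'
      have := affine_of_const_deriv (fun u' => e₃ (u', v)) 0 (fun u => he₃u u v) u'
      simpa using this
    have := affine_of_const_deriv (fun u' => e₂ (u', v)) (e₃ (0, v))
      (fun u => by simpa [h3 u] using he₂u u v) u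
    simpa using this
  · intro u v
    have := affine_of_const_deriv (fun u' => e₃ (u', v)) 0 (fun u => he₃u u v) u
    simpa using this
  · intro v; exact hxv 0 v
  · intro v; exact he₁v 0 v
  · intro v; simpa using he₂v 0 v
  · intro v; exact he₃v 0 v
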